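/- Call a polynomial p ∈ ℤ[q] d-palindromic (d ∈ ℕ) if natDegree(p) ≤ d and p.coeff(j) = p.coeff(d − j) for all 0 ≤ j ≤ d. Let B and X be 2×2 matrices over ℤ[q] and let m, c ∈ ℕ. Suppose trace(B) is m-palindromic, det(B) is 2m-palindromic, trace(X) is c-palindromic, and trace(B·X) is (c+m)-palindromic. Then for every k ∈ ℕ, trace(B^k · X) is (c + k·m)-palindromic. -/

import Mathlib

open Polynomial

/-- A polynomial `p ∈ ℤ[q]` is `d`-palindromic (symmetric with center `d/2`) if its
`natDegree` is at most `d` and `coeff j = coeff (d - j)` for all `0 ≤ j ≤ d`. -/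
def IsPalindromic (p : Polynomial ℤ) (d : ℕ) : Prop :=
  p.natDegree ≤ d ∧ ∀ j ≤ d, p.coeff j = p.coeff (d - j)

lemma isPalindromic_iff (p : Polynomial ℤ) (d : ℕ) :
    IsPalindromic p d ↔ p.natDegree ≤ d ∧ reflect d p = p := by
  constructor
  · rintro ⟨hd, h⟩
    refine ⟨hd, ?_⟩
    ext i
    rw [coeff_reflect]
    rcases le_or_gt i d with hi | hi
    · rw [revAt_le hi, ← h i hi]
    · rw [revAt_eq_self_of_lt hi]
  · rintro ⟨hd, h⟩
    refine ⟨hd, fun j hj => ?_⟩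
    conv_lhs => rw [← h]
    rw [coeff_reflect, revAt_le hj]

lemma IsPalindromic.mul {p q : Polynomial ℤ} {d e : ℕ}
    (hp : IsPalindromic p d) (hq : IsPalindromic q e) :
    IsPalindromic (p * q) (d + e) := by
  rw [isPalindromic_iff] at *
  refine ⟨le_trans (natDegree_mul_le) (add_le_add hp.1 hq.1), ?_⟩
  rw [reflect_mul p q hp.1 hq.1, hp.2, hq.2]

lemma IsPalindromic.sub {p q : Polynomial ℤ} {d : ℕ}
    (hp : IsPalindromic p d) (hq : IsPalindromic q d) :
    IsPalindromic (p - q) d := by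
  rw [isPalindromic_iff] at *
  constructor
  · exact le_trans (natDegree_sub_le _ _) (max_le hp.1 hq.1)
  · ext i
    simp only [coeff_reflect, coeff_sub]
    conv_rhs => rw [← hp.2, ← hq.2]
    simp [coeff_reflect]

lemma cayley2 (B : Matrix (Fin 2) (Fin 2) (Polynomial ℤ)) :
    B ^ 2 = B.trace • B - B.det • (1 : Matrix (Fin 2) (Fin 2) (Polynomial ℤ)) := by
  ext i j : 2
  fin_cases i <;> fin_cases j <;>
    simp only [pow_two, Matrix.mul_apply, Matrix.trace_fin_two, Matrix.det_fin_two,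
      Fin.sum_univ_two, Matrix.one_apply, Matrix.smul_apply, Matrix.sub_apply, smul_eq_mul,
      Fin.isValue, ite_true, ite_false, Fin.zero_eta, Fin.mk_one, mul_one, mul_zero,
      if_true, Fin.cons_zero, Fin.cons_one, one_ne_zero, zero_ne_one, if_false] <;> ring_nf

/-- if `tr B` is `m`-palindromic, `det B` is `2m`-palindromic, `tr X` is
`c`-palindromic and `tr (B·X)` is `(c+m)`-palindromic, then `tr (Bᵏ·X)` is
`(c + k·m)`-palindromic for every `k`. -/
theorem trace_pow_mul_palindromic
    (B X : Matrix (Fin 2) (Fin 2) (Polynomial ℤ)) (m c : ℕ)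
    (hB : IsPalindromic B.trace m)
    (hdet : IsPalindromic B.det (2 * m))
    (hX : IsPalindromic X.trace c)
    (hBX : IsPalindromic (B * X).trace (c + m)) :
    ∀ k : ℕ, IsPalindromic ((B ^ k * X).trace) (c + k * m) := by
  have key : ∀ k : ℕ, IsPalindromic ((B ^ k * X).trace) (c + k * m) ∧
      IsPalindromic ((B ^ (k + 1) * X).trace) (c + (k + 1) * m) := by
    intro k
    induction k with
    | zero => simpa using ⟨hX, hBX⟩
    | succ n ih =>
      refine ⟨ih.2, ?_⟩
      have hrec : (B ^ (n + 2) * X).trace =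
          B.trace * (B ^ (n + 1) * X).trace - B.det * (B ^ n * X).trace := by
        have : B ^ (n + 2) = B.trace • B ^ (n + 1) - B.det • B ^ n := by
          have h2 : B ^ (n + 2) = B ^ 2 * B ^ n := by rw [show n + 2 = 2 + n from by ring, pow_add]
          rw [h2, cayley2, sub_mul, smul_mul_assoc, smul_mul_assoc, one_mul,
            ← pow_succ']
        rw [this, Matrix.sub_mul, Matrix.smul_mul, Matrix.smul_mul, Matrix.trace_sub,
          Matrix.trace_smul, Matrix.trace_smul, smul_eq_mul, smul_eq_mul]
      rw [hrec]
      have h1 : IsPalindromic (B.trace * (B ^ (n + 1) * X).trace) (c + (n + 2) * m) := by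
        have := hB.mul ih.2
        have he : m + (c + (n + 1) * m) = c + (n + 2) * m := by ring
        rwa [he] at this
      have h2 : IsPalindromic (B.det * (B ^ n * X).trace) (c + (n + 2) * m) := by
        have := hdet.mul ih.1
        have he : 2 * m + (c + n * m) = c + (n + 2) * m := by ring
        rwa [he] at this
      exact h1.sub h2
  exact fun k => (key k).1
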